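/- Let p be a prime and let M be a saturated, semiperfect commutative monoid (written additively). Then the inclusion of the units M^* into M is relatively perfect, i.e. the relative Frobenius M ⊕_{M^*,F_{M^*}} M^* → M is bijective. Concretely: (i) every m ∈ M can be written as m = p·x + y with x ∈ M and y ∈ M^*; and (ii) whenever x, x' ∈ M and y, y' ∈ M^* satisfy p·x + y = p·x' + y', there exists w ∈ M^* with x' = x + w and y = y' + p·w. -/

import Mathlib

/-- Let `p` be a prime and let `M` be a saturated, semiperfect commutative
monoid (written additively).  Saturation of a cancellative monoid `M` is expressed
elementarily: whenever an element `a - b` of the Grothendieck group has a positive multiple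
lying in `M` (i.e. `n • a = n • b + m` for some `m ∈ M` and `n > 0`), it lies in `M` itself
(i.e. `a = b + m'` for some `m' ∈ M`).  Semiperfect means the Frobenius `x ↦ p • x` is
surjective.  Then the inclusion `M^* → M` of the units is relatively perfect:
(i) every `m ∈ M` can be written as `m = p • x + y` with `x ∈ M` and `y` a unit; and
(ii) whenever `p • x + y = p • x' + y'` with `y, y'` units, there is a unit `w` with
`x' = x + w` and `y = y' + p • w`. -/
theorem saturated_semiperfect_units_relatively_perfect
    (p : ℕ) (hp : p.Prime) (M : Type*) [AddCancelCommMonoid M]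
    (hsat : ∀ a b : M, ∀ n : ℕ, 0 < n →
      (∃ m : M, n • a = n • b + m) → ∃ m : M, a = b + m)
    (hsemiperfect : ∀ m : M, ∃ x : M, m = p • x) :
    (∀ m : M, ∃ x y : M, IsAddUnit y ∧ m = p • x + y) ∧
    (∀ x x' y y' : M, IsAddUnit y → IsAddUnit y' →
      p • x + y = p • x' + y' →
      ∃ w : M, IsAddUnit w ∧ x' = x + w ∧ y = y' + p • w) := by
  have hp0 : 0 < p := hp.pos
  constructor
  · intro m
    obtain ⟨x, hx⟩ := hsemiperfect m
    exact ⟨x, 0, isAddUnit_zero, by simp [hx]⟩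
  · intro x x' y y' hy hy' h
    obtain ⟨z', hz'⟩ := hy'.exists_neg
    have h1 : p • x' = p • x + (y + z') := by
      have h2 : p • x + (y + z') = p • x' + (y' + z') := by
        rw [← add_assoc, h, add_assoc]
      rw [h2, hz', add_zero]
    obtain ⟨w, hw⟩ := hsat x' x p hp0 ⟨y + z', h1⟩
    have hpw : p • w = y + z' := by
      have h3 : p • x + p • w = p • x + (y + z') := by
        rw [← smul_add, ← hw, h1]
      exact add_left_cancel h3
    have hz'unit : IsAddUnit z' := IsAddUnit.of_add_eq_zero (a := z') y' (by rw [add_comm]; exact hz')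
    have hpwunit : IsAddUnit (p • w) := by rw [hpw]; exact hy.add hz'unit
    have hwunit : IsAddUnit w := by
      obtain ⟨n, hn⟩ := hpwunit.exists_neg
      refine IsAddUnit.of_add_eq_zero (a := w) ((p - 1) • w + n) ?_
      rw [← add_assoc]
      have : w + (p - 1) • w = p • w := by
        rw [add_comm, ← succ_nsmul, Nat.sub_add_cancel hp0]
      rw [this, hn]
    refine ⟨w, hwunit, hw, ?_⟩
    rw [hpw, show y' + (y + z') = y + (y' + z') from by abel, hz', add_zero]
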